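/- arXiv:2012.05142 — 2 statements merged into one kernel-verified Lean document; each statement's English description precedes it below -/
import Mathlib

section
/- Pinsker's inequality for finite sample spaces: for any two probability distributions p, q on a finite sample space Ω and any event A ⊆ Ω, 2(p(A) − q(A))² ≤ KL(p, q). -/
open Real Finset

/-- Derivative of the main auxiliary function. -/
private lemma aux_hasDerivAt (a : ℝ) {t : ℝ} (ht0 : 0 < t) (ht1 : t < 1) :
    HasDerivAt (fun t : ℝ => a * Real.log a - a * Real.log t
      + (1 - a) * Real.log (1 - a) - (1 - a) * Real.log (1 - t) - 2 * (a - t) ^ 2)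
      (-(a / t) + (1 - a) / (1 - t) + 4 * (a - t)) t := by
  have h1t : (0:ℝ) < 1 - t := by linarith
  have h1 : HasDerivAt (fun t : ℝ => Real.log t) t⁻¹ t := Real.hasDerivAt_log ht0.ne'
  have h2i : HasDerivAt (fun t : ℝ => 1 - t) (-1) t := by
    simpa using (hasDerivAt_id t).const_sub 1
  have h2 : HasDerivAt (fun t : ℝ => Real.log (1 - t)) ((1 - t)⁻¹ * (-1)) t :=
    (Real.hasDerivAt_log h1t.ne').comp t h2i
  have h3 : HasDerivAt (fun t : ℝ => (a - t) ^ 2) (↑2 * (a - t) ^ 1 * (-1)) t :=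
    ((hasDerivAt_id t).const_sub a).pow 2
  have H := ((((hasDerivAt_const t (a * Real.log a)).sub (h1.const_mul a)).add
      (hasDerivAt_const t ((1 - a) * Real.log (1 - a)))).sub (h2.const_mul (1 - a))).sub
      (h3.const_mul 2)
  refine H.congr_deriv ?_
  ring

/-- two-point Pinsker for `0 < a < 1`, `a ≤ b < 1`. -/
private lemma twoPoint_mid_le {a b : ℝ} (ha0 : 0 < a) (ha1 : a < 1) (hb1 : b < 1)
    (hab : a ≤ b) :
    2 * (a - b) ^ 2 ≤ a * Real.log (a / b) + (1 - a) * Real.log ((1 - a) / (1 - b)) := by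
  have hb0 : 0 < b := lt_of_lt_of_le ha0 hab
  set φ : ℝ → ℝ := fun t => a * Real.log a - a * Real.log t
      + (1 - a) * Real.log (1 - a) - (1 - a) * Real.log (1 - t) - 2 * (a - t) ^ 2 with hφ
  have hsub : Set.Icc a b ⊆ Set.Ioo (0:ℝ) 1 := fun t ht => ⟨lt_of_lt_of_le ha0 ht.1, lt_of_le_of_lt ht.2 hb1⟩
  have hmono : MonotoneOn φ (Set.Icc a b) := by
    apply monotoneOn_of_deriv_nonneg (convex_Icc a b)
    · intro t ht
      have h := hsub ht
      exact ((aux_hasDerivAt a h.1 h.2).continuousAt).continuousWithinAt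
    · intro t ht
      rw [interior_Icc] at ht
      have h := hsub (Set.Ioo_subset_Icc_self ht)
      exact (aux_hasDerivAt a h.1 h.2).differentiableAt.differentiableWithinAt
    · intro t ht
      rw [interior_Icc] at ht
      have h := hsub (Set.Ioo_subset_Icc_self ht)
      rw [(aux_hasDerivAt a h.1 h.2).deriv]
      have ht0 := h.1
      have ht1 : (0:ℝ) < 1 - t := by linarith [h.2]
      have hat : a ≤ t := ht.1.le
      have key : -(a / t) + (1 - a) / (1 - t) = (t - a) / (t * (1 - t)) := by
        field_simp; ring
      rw [key]
      have hpos : (0:ℝ) < t * (1 - t) := by positivity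
      rw [← sub_nonneg] at hat ⊢
      have : 4 * (t - a) * (t * (1 - t)) ≤ t - a := by
        nlinarith [mul_nonneg (sub_nonneg.2 hat) (sq_nonneg (1 - 2 * t))]
      have h4 : 4 * (t - a) ≤ (t - a) / (t * (1 - t)) := by
        rw [le_div_iff₀ hpos]; linarith
      linarith
  have h0 : φ a = 0 := by
    simp [hφ]
  have := hmono (Set.left_mem_Icc.2 hab) (Set.right_mem_Icc.2 hab) hab
  rw [h0] at this
  have e1 : Real.log (a / b) = Real.log a - Real.log b := Real.log_div ha0.ne' hb0.ne'
  have e2 : Real.log ((1 - a) / (1 - b)) = Real.log (1 - a) - Real.log (1 - b) :=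
    Real.log_div (by linarith) (by linarith)
  rw [e1, e2]
  simp only [hφ] at this
  nlinarith [this]

/-- the `a = 0` boundary case: `2 b² ≤ -log (1-b)` for `0 ≤ b < 1`. -/
private lemma twoPoint_zero {b : ℝ} (hb0 : 0 ≤ b) (hb1 : b < 1) :
    2 * b ^ 2 ≤ -Real.log (1 - b) := by
  set g : ℝ → ℝ := fun t => -Real.log (1 - t) - 2 * t ^ 2 with hg
  have hd : ∀ t ∈ Set.Ioo 0 b, HasDerivAt g (-((1 - t)⁻¹ * (-1)) - 2 * (2 * t ^ 1 * 1)) t := by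
    intro t ht
    have h1t : (0:ℝ) < 1 - t := by linarith [ht.2]
    have h2i : HasDerivAt (fun t : ℝ => 1 - t) (-1) t := by
      simpa using (hasDerivAt_id t).const_sub 1
    have h2 : HasDerivAt (fun t : ℝ => Real.log (1 - t)) ((1 - t)⁻¹ * (-1)) t :=
      (Real.hasDerivAt_log h1t.ne').comp t h2i
    have h3 : HasDerivAt (fun t : ℝ => t ^ 2) (↑2 * t ^ 1 * 1) t := (hasDerivAt_id t).pow 2
    exact (h2.neg).sub (h3.const_mul 2)
  have hmono : MonotoneOn g (Set.Icc 0 b) := by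
    apply monotoneOn_of_deriv_nonneg (convex_Icc 0 b)
    · apply ContinuousOn.sub
      · apply ContinuousOn.neg
        apply Real.continuousOn_log.comp (Continuous.continuousOn (by continuity))
        intro t ht
        simp only [Set.mem_compl_iff, Set.mem_singleton_iff]
        have : t ≤ b := ht.2
        intro h; rw [sub_eq_zero] at h; exact absurd h.symm (by linarith [ht.2])
      · exact (continuous_const.mul (continuous_pow 2)).continuousOn
    · intro t ht
      rw [interior_Icc] at ht
      exact (hd t ht).differentiableAt.differentiableWithinAt
    · intro t ht
      rw [interior_Icc] at ht
      rw [(hd t ht).deriv]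
      have ht0 := ht.1
      have h1t : (0:ℝ) < 1 - t := by linarith [ht.2]
      have : 4 * t ≤ (1 - t)⁻¹ := by
        rw [inv_eq_one_div, le_div_iff₀ h1t]
        nlinarith [sq_nonneg (1 - 2 * t)]
      nlinarith
  rcases eq_or_lt_of_le hb0 with h | h
  · simp [← h]
  · have := hmono (Set.left_mem_Icc.2 hb0) (Set.right_mem_Icc.2 hb0) hb0
    simp only [hg] at this
    simp at this
    nlinarith [this]

/-- full two-point Pinsker. -/
private lemma twoPoint {a b : ℝ} (ha0 : 0 ≤ a) (ha1 : a ≤ 1) (hb0 : 0 ≤ b) (hb1 : b ≤ 1)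
    (hb0' : 0 < a → 0 < b) (hb1' : a < 1 → b < 1) :
    2 * (a - b) ^ 2 ≤ a * Real.log (a / b) + (1 - a) * Real.log ((1 - a) / (1 - b)) := by
  -- symmetric version lemma: handle a = 0 and a = 1 and middle with both orders
  rcases eq_or_lt_of_le ha0 with hA0 | hA0
  · -- a = 0
    rcases eq_or_lt_of_le hb0 with hB0 | hB0
    · simp [← hA0, ← hB0]
    · have hbl1 : b < 1 := hb1' (by rw [← hA0]; norm_num)
      have := twoPoint_zero hb0 hbl1
      rw [← hA0]
      have : Real.log (1 / (1 - b)) = -Real.log (1 - b) := by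
        rw [one_div, Real.log_inv]
      simp only [zero_mul, sub_zero, zero_sub, one_mul, this]
      have h2 := twoPoint_zero hb0 hbl1
      nlinarith [h2]
  rcases eq_or_lt_of_le ha1 with hA1 | hA1
  · -- a = 1
    rcases eq_or_lt_of_le hb1 with hB1 | hB1
    · simp [hA1, hB1]
    · have hbg0 : 0 < b := hb0' (by rw [hA1]; norm_num)
      have h2 := twoPoint_zero (by linarith : (0:ℝ) ≤ 1 - b) (by linarith : 1 - b < 1)
      rw [hA1]
      simp only [sub_self, zero_mul, add_zero, one_mul]
      rw [show (1:ℝ) - (1 - b) = b by ring] at h2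
      rw [Real.log_div one_ne_zero hbg0.ne', Real.log_one]
      nlinarith
  · -- 0 < a < 1
    have hbg0 : 0 < b := hb0' hA0
    have hbl1 : b < 1 := hb1' hA1
    rcases le_or_gt a b with hab | hab
    · exact twoPoint_mid_le hA0 hA1 hbl1 hab
    · have H := twoPoint_mid_le (a := 1 - a) (b := 1 - b) (by linarith) (by linarith)
        (by linarith) (by linarith)
      rw [show (1:ℝ) - (1 - a) = a by ring, show (1:ℝ) - (1 - b) = b by ring] at H
      nlinarith [H]

/-- log-sum inequality over a finset. -/
private lemma logsum {Ω : Type*} (S : Finset Ω) (p q : Ω → ℝ)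
    (hp0 : ∀ x, 0 ≤ p x) (hq0 : ∀ x, 0 ≤ q x) (habs : ∀ x, 0 < p x → 0 < q x) :
    (∑ x ∈ S, p x) * Real.log ((∑ x ∈ S, p x) / (∑ x ∈ S, q x))
      ≤ ∑ x ∈ S, p x * Real.log (p x / q x) := by
  set a := ∑ x ∈ S, p x with ha
  set b := ∑ x ∈ S, q x with hb
  rcases eq_or_lt_of_le (Finset.sum_nonneg fun x _ => hp0 x : (0:ℝ) ≤ a) with hA | hA
  · -- a = 0 : every p x = 0 on S
    have hz : ∀ x ∈ S, p x = 0 :=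
      (Finset.sum_eq_zero_iff_of_nonneg fun x _ => hp0 x).1 hA.symm
    have hA0 : a = 0 := by rw [ha]; exact hA.symm
    rw [hA0, zero_mul]
    apply Finset.sum_nonneg
    intro x hx
    rw [hz x hx]
    simp
  · -- a > 0 : then b > 0
    obtain ⟨x₀, hx₀S, hx₀⟩ : ∃ x ∈ S, 0 < p x := by
      by_contra h
      push_neg at h
      have : a = 0 := Finset.sum_eq_zero fun x hx => le_antisymm (h x hx) (hp0 x)
      linarith
    have hB : 0 < b := lt_of_lt_of_le (habs x₀ hx₀)
      (Finset.single_le_sum (fun x _ => hq0 x) hx₀S)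
    have key : ∀ x ∈ S, p x * Real.log (a / b) + p x - q x * (a / b)
        ≤ p x * Real.log (p x / q x) := by
      intro x _
      rcases eq_or_lt_of_le (hp0 x) with hpx | hpx
      · rw [← hpx]
        simp only [zero_mul, zero_add, zero_sub, zero_mul]
        have : 0 ≤ q x * (a / b) := mul_nonneg (hq0 x) (by positivity)
        linarith
      · have hqx := habs x hpx
        have hu : Real.log ((q x * a) / (p x * b)) ≤ (q x * a) / (p x * b) - 1 :=
          Real.log_le_sub_one_of_pos (by positivity)
        have hlogeq : Real.log ((q x * a) / (p x * b))
            = Real.log (a / b) - Real.log (p x / q x) := by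
          rw [Real.log_div (by positivity) (by positivity),
            Real.log_div hA.ne' hB.ne', Real.log_div hpx.ne' hqx.ne',
            Real.log_mul hqx.ne' hA.ne', Real.log_mul hpx.ne' hB.ne']
          ring
        rw [hlogeq] at hu
        have hux : p x * ((q x * a) / (p x * b)) = q x * (a / b) := by
          field_simp
        have := mul_le_mul_of_nonneg_left hu (le_of_lt hpx)
        rw [mul_sub, mul_sub, hux, mul_one] at this
        linarith
    have hsum := Finset.sum_le_sum key
    have : ∑ x ∈ S, (p x * Real.log (a / b) + p x - q x * (a / b))
        = a * Real.log (a / b) + a - b * (a / b) := by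
      rw [Finset.sum_sub_distrib, Finset.sum_add_distrib, ← Finset.sum_mul, ← Finset.sum_mul]
    rw [this] at hsum
    have hba : b * (a / b) = a := by field_simp
    rw [hba] at hsum
    linarith

/-- Pinsker's inequality on a finite sample space: for probability mass functions
    p, q on a finite Ω (with q positive wherever p is) and any event A ⊆ Ω,
    2(p(A) − q(A))² ≤ KL(p, q) = ∑ₓ p(x) ln(p(x)/q(x)). -/
theorem stmt_2 {Ω : Type*} [Fintype Ω]
    (p q : Ω → ℝ)
    (hp0 : ∀ x, 0 ≤ p x) (hq0 : ∀ x, 0 ≤ q x)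
    (hp1 : ∑ x, p x = 1) (hq1 : ∑ x, q x = 1)
    (habs : ∀ x, 0 < p x → 0 < q x)
    (A : Finset Ω) :
    2 * (∑ x ∈ A, p x - ∑ x ∈ A, q x) ^ 2 ≤ ∑ x, p x * Real.log (p x / q x) := by
  classical
  set a := ∑ x ∈ A, p x with ha
  set b := ∑ x ∈ A, q x with hb
  have hpc : ∑ x ∈ Aᶜ, p x = 1 - a := by
    have := Finset.sum_add_sum_compl A p
    rw [hp1] at this; linarith
  have hqc : ∑ x ∈ Aᶜ, q x = 1 - b := by
    have := Finset.sum_add_sum_compl A q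
    rw [hq1] at this; linarith
  have hsplit : ∑ x, p x * Real.log (p x / q x)
      = ∑ x ∈ A, p x * Real.log (p x / q x) + ∑ x ∈ Aᶜ, p x * Real.log (p x / q x) :=
    (Finset.sum_add_sum_compl A _).symm
  have h1 := logsum A p q hp0 hq0 habs
  have h2 := logsum Aᶜ p q hp0 hq0 habs
  rw [hpc, hqc] at h2
  have ha0 : 0 ≤ a := Finset.sum_nonneg fun x _ => hp0 x
  have hb0 : 0 ≤ b := Finset.sum_nonneg fun x _ => hq0 x
  have ha1 : a ≤ 1 := by
    have : 0 ≤ ∑ x ∈ Aᶜ, p x := Finset.sum_nonneg fun x _ => hp0 x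
    rw [hpc] at this; linarith
  have hb1 : b ≤ 1 := by
    have : 0 ≤ ∑ x ∈ Aᶜ, q x := Finset.sum_nonneg fun x _ => hq0 x
    rw [hqc] at this; linarith
  have hb0' : 0 < a → 0 < b := by
    intro hA
    obtain ⟨x₀, hx₀S, hx₀⟩ : ∃ x ∈ A, 0 < p x := by
      by_contra h
      push_neg at h
      have : a = 0 := Finset.sum_eq_zero fun x hx => le_antisymm (h x hx) (hp0 x)
      linarith
    exact lt_of_lt_of_le (habs x₀ hx₀) (Finset.single_le_sum (fun x _ => hq0 x) hx₀S)
  have hb1' : a < 1 → b < 1 := by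
    intro hA
    have hApos : 0 < ∑ x ∈ Aᶜ, p x := by rw [hpc]; linarith
    obtain ⟨x₀, hx₀S, hx₀⟩ : ∃ x ∈ Aᶜ, 0 < p x := by
      by_contra h
      push_neg at h
      have : ∑ x ∈ Aᶜ, p x = 0 :=
        Finset.sum_eq_zero fun x hx => le_antisymm (h x hx) (hp0 x)
      linarith
    have : 0 < ∑ x ∈ Aᶜ, q x := lt_of_lt_of_le (habs x₀ hx₀)
      (Finset.single_le_sum (fun x _ => hq0 x) hx₀S)
    rw [hqc] at this; linarith
  have h3 := twoPoint ha0 ha1 hb0 hb1 hb0' hb1'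
  rw [hsplit]
  linarith
end

section
/- Complementary error function lower bound: for all x ≥ 0, erfc(x) ≥ √(γ − 1) · e^{−γx²}, where γ = √(2e/π). -/
open scoped Real

/-- The complementary error function erfc(x) = (2/√π)·∫_x^∞ e^{−t²} dt. -/
noncomputable def erfc (x : ℝ) : ℝ :=
  (2 / Real.sqrt π) * ∫ t in Set.Ioi x, Real.exp (-t ^ 2)

open MeasureTheory Filter Topology

lemma integral_mul_exp_neg_mul_sq_Ioi' {b : ℝ} (hb : 0 < b) (x : ℝ) :
    ∫ t in Set.Ioi x, t * Real.exp (-b * t ^ 2) = Real.exp (-b * x ^ 2) / (2 * b) := by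
  have hderiv : ∀ t ∈ Set.Ici x,
      HasDerivAt (fun t : ℝ => -(Real.exp (-b * t ^ 2) / (2 * b)))
        (t * Real.exp (-b * t ^ 2)) t := by
    intro t _
    have h1 : HasDerivAt (fun t : ℝ => -b * t ^ 2) (-b * (2 * t)) t := by
      simpa using ((hasDerivAt_pow 2 t).const_mul (-b))
    have h2 := (h1.exp.div_const (2 * b)).neg
    refine h2.congr_deriv ?_
    field_simp
  have hint : IntegrableOn (fun t : ℝ => t * Real.exp (-b * t ^ 2)) (Set.Ioi x) := by
    have := (integrable_mul_exp_neg_mul_sq hb).integrableOn (s := Set.Ioi x)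
    simpa [mul_comm] using this
  have htend : Tendsto (fun t : ℝ => -(Real.exp (-b * t ^ 2) / (2 * b))) atTop (𝓝 0) := by
    have : Tendsto (fun t : ℝ => -b * t ^ 2) atTop atBot := by
      apply Filter.Tendsto.const_mul_atTop_of_neg (by linarith : -b < 0)
      simpa using tendsto_pow_atTop (n := 2) (by norm_num)
    have := (Real.tendsto_exp_atBot.comp this).div_const (2 * b)
    simpa using this.neg
  have := integral_Ioi_of_hasDerivAt_of_tendsto' hderiv hint htend
  rw [this]
  ring

/-- For all x ≥ 0, erfc(x) ≥ √(γ − 1)·e^{−γx²} where γ = √(2e/π). -/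
theorem stmt_12 (x : ℝ) (hx : 0 ≤ x) :
    erfc x ≥ Real.sqrt (Real.sqrt (2 * Real.exp 1 / π) - 1) *
      Real.exp (-(Real.sqrt (2 * Real.exp 1 / π)) * x ^ 2) := by
  set γ : ℝ := Real.sqrt (2 * Real.exp 1 / π) with hγdef
  have hπ : (0 : ℝ) < π := Real.pi_pos
  have h2e : π < 2 * Real.exp 1 := by
    have h1 : (2.7182818283 : ℝ) < Real.exp 1 := Real.exp_one_gt_d9
    have h2 : π < 3.15 := Real.pi_lt_d2
    nlinarith
  have hratio : 1 < 2 * Real.exp 1 / π := (one_lt_div hπ).2 h2e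
  have hγsq : γ ^ 2 = 2 * Real.exp 1 / π := by
    rw [hγdef, sq, Real.mul_self_sqrt (by linarith)]
  have hγ1 : 1 < γ := by
    nlinarith [Real.sqrt_nonneg (2 * Real.exp 1 / π), hγsq]
  have hγpos : 0 < γ := by linarith
  have ha : 0 < γ - 1 := by linarith
  -- rewrite the RHS as an integral
  have key : Real.exp (-γ * x ^ 2) = 2 * γ * ∫ t in Set.Ioi x, t * Real.exp (-γ * t ^ 2) := by
    rw [integral_mul_exp_neg_mul_sq_Ioi' hγpos]
    field_simp
  -- pointwise inequality on Ioi x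
  have hpt : ∀ t ∈ Set.Ioi x,
      Real.sqrt (γ - 1) * (2 * γ) * (t * Real.exp (-γ * t ^ 2)) ≤
        (2 / Real.sqrt π) * Real.exp (-t ^ 2) := by
    intro t ht
    have htpos : 0 ≤ t := le_trans hx (le_of_lt ht)
    have hsπ : 0 < Real.sqrt π := Real.sqrt_pos.2 hπ
    -- reduce to sqrt π * γ * sqrt (γ-1) * t ≤ exp ((γ-1) * t^2)
    have hexp : Real.sqrt π * γ * Real.sqrt (γ - 1) * t ≤ Real.exp ((γ - 1) * t ^ 2) := by
      have hLnn : 0 ≤ Real.sqrt π * γ * Real.sqrt (γ - 1) * t := by positivity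
      have hRnn : 0 ≤ Real.exp ((γ - 1) * t ^ 2) := (Real.exp_pos _).le
      have hsq : (Real.sqrt π * γ * Real.sqrt (γ - 1) * t) ^ 2 ≤
          (Real.exp ((γ - 1) * t ^ 2)) ^ 2 := by
        have e1 : (Real.sqrt π * γ * Real.sqrt (γ - 1) * t) ^ 2 =
            π * γ ^ 2 * (γ - 1) * t ^ 2 := by
          rw [mul_pow, mul_pow, mul_pow, Real.sq_sqrt hπ.le, Real.sq_sqrt ha.le]
        have e2 : π * γ ^ 2 = 2 * Real.exp 1 := by
          rw [hγsq]; field_simp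
        have e3 : (Real.exp ((γ - 1) * t ^ 2)) ^ 2 = Real.exp (2 * ((γ - 1) * t ^ 2)) := by
          rw [← Real.exp_nat_mul]; norm_num
        rw [e1, e3]
        -- need: π γ² (γ-1) t² = 2e(γ-1)t² = e * (2(γ-1)t²) ≤ exp(2(γ-1)t²)
        have hw : ∀ w : ℝ, Real.exp 1 * w ≤ Real.exp (1 + (w - 1)) := by
          intro w
          rw [Real.exp_add]
          have := Real.add_one_le_exp (w - 1)
          nlinarith [Real.exp_pos (1:ℝ)]
        have := hw (2 * ((γ - 1) * t ^ 2))
        simp only [add_sub_cancel] at this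
        nlinarith [e2]
      calc Real.sqrt π * γ * Real.sqrt (γ - 1) * t
          = Real.sqrt ((Real.sqrt π * γ * Real.sqrt (γ - 1) * t) ^ 2) := (Real.sqrt_sq hLnn).symm
        _ ≤ Real.sqrt ((Real.exp ((γ - 1) * t ^ 2)) ^ 2) := Real.sqrt_le_sqrt hsq
        _ = Real.exp ((γ - 1) * t ^ 2) := Real.sqrt_sq hRnn
    -- now multiply through
    have hrw : Real.sqrt (γ - 1) * (2 * γ) * (t * Real.exp (-γ * t ^ 2)) * Real.sqrt π =
        2 * (Real.sqrt π * γ * Real.sqrt (γ - 1) * t) * Real.exp (-γ * t ^ 2) := by ring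
    have hmul : Real.sqrt (γ - 1) * (2 * γ) * (t * Real.exp (-γ * t ^ 2)) * Real.sqrt π ≤
        2 * Real.exp ((γ - 1) * t ^ 2) * Real.exp (-γ * t ^ 2) := by
      rw [hrw]
      have hE : 0 < Real.exp (-γ * t ^ 2) := Real.exp_pos _
      nlinarith [hexp]
    have hcomb : 2 * Real.exp ((γ - 1) * t ^ 2) * Real.exp (-γ * t ^ 2) =
        2 * Real.exp (-t ^ 2) := by
      rw [mul_assoc, ← Real.exp_add]; ring_nf
    rw [hcomb] at hmul
    rw [div_mul_eq_mul_div, le_div_iff₀ hsπ]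
    linarith
  -- integrability
  have hint1 : IntegrableOn (fun t : ℝ => Real.exp (-t ^ 2)) (Set.Ioi x) := by
    have := (integrable_exp_neg_mul_sq (by norm_num : (0:ℝ) < 1)).integrableOn (s := Set.Ioi x)
    simpa using this
  have hint2 : IntegrableOn (fun t : ℝ => t * Real.exp (-γ * t ^ 2)) (Set.Ioi x) := by
    have := (integrable_mul_exp_neg_mul_sq hγpos).integrableOn (s := Set.Ioi x)
    simpa [mul_comm] using this
  -- put it together
  have hmono : ∫ t in Set.Ioi x, Real.sqrt (γ - 1) * (2 * γ) * (t * Real.exp (-γ * t ^ 2)) ≤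
      ∫ t in Set.Ioi x, (2 / Real.sqrt π) * Real.exp (-t ^ 2) := by
    apply setIntegral_mono_on ((hint2.const_mul _)) (hint1.const_mul _) measurableSet_Ioi hpt
  rw [integral_const_mul, integral_const_mul] at hmono
  rw [ge_iff_le, key]
  unfold erfc
  calc Real.sqrt (γ - 1) * (2 * γ * ∫ t in Set.Ioi x, t * Real.exp (-γ * t ^ 2))
      = Real.sqrt (γ - 1) * (2 * γ) * ∫ t in Set.Ioi x, t * Real.exp (-γ * t ^ 2) := by ring
    _ ≤ (2 / Real.sqrt π) * ∫ t in Set.Ioi x, Real.exp (-t ^ 2) := hmono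
end
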